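/- arXiv:2208.07984 — 2 statements merged into one kernel-verified Lean document; each statement's English description precedes it below -/
import Mathlib

section
/- For univariate Gaussians G1 = N(μ1,σ1²) and G2 = N(μ2,σ2²), with σmax = max{σ1,σ2}, the squared Hellinger distance satisfies dH(G1,G2)² ≥ dH(N(μ1,σmax²), N(μ2,σmax²))² and dH(G1,G2)² ≥ dH(N(0,σ1²), N(0,σ2²))². -/
open Real MeasureTheory

/-- Density of the univariate Gaussian `N(μ, σ²)`. -/
noncomputable def gpdf (μ σ x : ℝ) : ℝ :=
  (1 / (σ * Real.sqrt (2 * π))) * Real.exp (-((x - μ) ^ 2) / (2 * σ ^ 2))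

/-- Squared Hellinger distance between the univariate Gaussians `N(μ₁,σ₁²)` and `N(μ₂,σ₂²)`,
defined via their Lebesgue densities: `dH² = (1/2) ∫ (√p - √q)² dx`. -/
noncomputable def hellingerSqGaussian (μ₁ σ₁ μ₂ σ₂ : ℝ) : ℝ :=
  (1 / 2) * ∫ x : ℝ, (Real.sqrt (gpdf μ₁ σ₁ x) - Real.sqrt (gpdf μ₂ σ₂ x)) ^ 2

lemma gauss_int {b : ℝ} (c : ℝ) (hb : 0 < b) :
    ∫ x : ℝ, Real.exp (-(b * (x - c) ^ 2)) = Real.sqrt (π / b) := by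
  have := hb
  rw [integral_sub_right_eq_self (μ := volume) (fun y => Real.exp (-(b * y ^ 2))) c]
  simpa [neg_mul] using integral_gaussian b

lemma gauss_integrable {b : ℝ} (c : ℝ) (hb : 0 < b) :
    Integrable (fun x : ℝ => Real.exp (-(b * (x - c) ^ 2))) := by
  have := (integrable_exp_neg_mul_sq hb).comp_sub_right c
  simpa [neg_mul] using this

lemma gpdf_nonneg {σ : ℝ} (hσ : 0 < σ) (μ x : ℝ) : 0 ≤ gpdf μ σ x := by
  unfold gpdf; positivity

lemma gpdf_eq (μ σ x : ℝ) :
    gpdf μ σ x = (1 / (σ * Real.sqrt (2 * π))) * Real.exp (-(1 / (2 * σ ^ 2) * (x - μ) ^ 2)) := by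
  unfold gpdf
  exact congrArg (fun t => (1 / (σ * Real.sqrt (2 * π))) * Real.exp t) (by ring)

lemma sqrt_gpdf {σ : ℝ} (hσ : 0 < σ) (μ x : ℝ) :
    Real.sqrt (gpdf μ σ x) =
      Real.sqrt (1 / (σ * Real.sqrt (2 * π))) *
        Real.exp (-(1 / (4 * σ ^ 2) * (x - μ) ^ 2)) := by
  unfold gpdf
  rw [Real.sqrt_mul (by positivity), ← Real.exp_half]
  exact congrArg (fun t => Real.sqrt (1 / (σ * Real.sqrt (2 * π))) * Real.exp t) (by ring)

lemma hellinger_closed (μ₁ σ₁ μ₂ σ₂ : ℝ) (h₁ : 0 < σ₁) (h₂ : 0 < σ₂) :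
    hellingerSqGaussian μ₁ σ₁ μ₂ σ₂ =
      1 - Real.sqrt (2 * σ₁ * σ₂ / (σ₁ ^ 2 + σ₂ ^ 2)) *
        Real.exp (-(μ₁ - μ₂) ^ 2 / (4 * (σ₁ ^ 2 + σ₂ ^ 2))) := by
  have hS : 0 < σ₁ ^ 2 + σ₂ ^ 2 := by positivity
  set s : ℝ := Real.sqrt (2 * π) with hs
  have hs2π : s ^ 2 = 2 * π := Real.sq_sqrt (by positivity)
  have hspos : 0 < s := Real.sqrt_pos.mpr (by positivity)
  have hπ : π = s ^ 2 / 2 := by rw [hs2π]; ring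
  set S : ℝ := σ₁ ^ 2 + σ₂ ^ 2 with hSdef
  set C₁ : ℝ := 1 / (σ₁ * s) with hC₁
  set C₂ : ℝ := 1 / (σ₂ * s) with hC₂
  set a : ℝ := S / (4 * σ₁ ^ 2 * σ₂ ^ 2) with ha
  set m : ℝ := (μ₁ * σ₂ ^ 2 + μ₂ * σ₁ ^ 2) / S with hm
  set k : ℝ := (μ₁ - μ₂) ^ 2 / (4 * S) with hk
  have ha0 : 0 < a := by positivity
  have hb₁ : 0 < 1 / (2 * σ₁ ^ 2) := by positivity
  have hb₂ : 0 < 1 / (2 * σ₂ ^ 2) := by positivity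
  -- pointwise expansion
  have hpt : ∀ x : ℝ,
      (Real.sqrt (gpdf μ₁ σ₁ x) - Real.sqrt (gpdf μ₂ σ₂ x)) ^ 2 =
        C₁ * Real.exp (-(1 / (2 * σ₁ ^ 2) * (x - μ₁) ^ 2)) +
        C₂ * Real.exp (-(1 / (2 * σ₂ ^ 2) * (x - μ₂) ^ 2)) -
        (2 * (Real.sqrt C₁ * Real.sqrt C₂ * Real.exp (-k))) *
          Real.exp (-(a * (x - m) ^ 2)) := by
    intro x
    have e1 : Real.sqrt (gpdf μ₁ σ₁ x) ^ 2 = gpdf μ₁ σ₁ x :=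
      Real.sq_sqrt (gpdf_nonneg h₁ μ₁ x)
    have e2 : Real.sqrt (gpdf μ₂ σ₂ x) ^ 2 = gpdf μ₂ σ₂ x :=
      Real.sq_sqrt (gpdf_nonneg h₂ μ₂ x)
    have hexp : -(1 / (4 * σ₁ ^ 2) * (x - μ₁) ^ 2) + -(1 / (4 * σ₂ ^ 2) * (x - μ₂) ^ 2) =
        -k + -(a * (x - m) ^ 2) := by
      rw [hk, ha, hm, hSdef]
      field_simp
      ring
    have eprod : Real.sqrt (gpdf μ₁ σ₁ x) * Real.sqrt (gpdf μ₂ σ₂ x) =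
        Real.sqrt C₁ * Real.sqrt C₂ * Real.exp (-k) * Real.exp (-(a * (x - m) ^ 2)) := by
      rw [sqrt_gpdf h₁, sqrt_gpdf h₂]
      calc Real.sqrt C₁ * Real.exp (-(1 / (4 * σ₁ ^ 2) * (x - μ₁) ^ 2)) *
            (Real.sqrt C₂ * Real.exp (-(1 / (4 * σ₂ ^ 2) * (x - μ₂) ^ 2)))
          = Real.sqrt C₁ * Real.sqrt C₂ *
              Real.exp (-(1 / (4 * σ₁ ^ 2) * (x - μ₁) ^ 2) +
                -(1 / (4 * σ₂ ^ 2) * (x - μ₂) ^ 2)) := by rw [Real.exp_add]; ring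
        _ = Real.sqrt C₁ * Real.sqrt C₂ * Real.exp (-k + -(a * (x - m) ^ 2)) := by rw [hexp]
        _ = _ := by rw [Real.exp_add]; ring
    calc (Real.sqrt (gpdf μ₁ σ₁ x) - Real.sqrt (gpdf μ₂ σ₂ x)) ^ 2
        = Real.sqrt (gpdf μ₁ σ₁ x) ^ 2 + Real.sqrt (gpdf μ₂ σ₂ x) ^ 2 -
            2 * (Real.sqrt (gpdf μ₁ σ₁ x) * Real.sqrt (gpdf μ₂ σ₂ x)) := by ring
      _ = _ := by rw [e1, e2, eprod, gpdf_eq μ₁ σ₁ x, gpdf_eq μ₂ σ₂ x]; ring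
  -- integrate
  have hI1 : Integrable (fun x : ℝ => C₁ * Real.exp (-(1 / (2 * σ₁ ^ 2) * (x - μ₁) ^ 2)) +
      C₂ * Real.exp (-(1 / (2 * σ₂ ^ 2) * (x - μ₂) ^ 2))) := by
    exact ((gauss_integrable μ₁ hb₁).const_mul C₁).add ((gauss_integrable μ₂ hb₂).const_mul C₂)
  have hI2 : Integrable (fun x : ℝ =>
      (2 * (Real.sqrt C₁ * Real.sqrt C₂ * Real.exp (-k))) * Real.exp (-(a * (x - m) ^ 2))) := by
    exact (gauss_integrable m ha0).const_mul _
  have hint : (∫ x : ℝ, (Real.sqrt (gpdf μ₁ σ₁ x) - Real.sqrt (gpdf μ₂ σ₂ x)) ^ 2) =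
      C₁ * Real.sqrt (π / (1 / (2 * σ₁ ^ 2))) + C₂ * Real.sqrt (π / (1 / (2 * σ₂ ^ 2))) -
        (2 * (Real.sqrt C₁ * Real.sqrt C₂ * Real.exp (-k))) * Real.sqrt (π / a) := by
    rw [funext hpt, integral_sub hI1 hI2,
      integral_add ((gauss_integrable μ₁ hb₁).const_mul C₁)
        ((gauss_integrable μ₂ hb₂).const_mul C₂),
      integral_const_mul, integral_const_mul, integral_const_mul,
      gauss_int μ₁ hb₁, gauss_int μ₂ hb₂, gauss_int m ha0]
  -- normalizations
  have hnorm : ∀ σ : ℝ, 0 < σ →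
      (1 / (σ * s)) * Real.sqrt (π / (1 / (2 * σ ^ 2))) = 1 := by
    intro σ hσ
    have h1 : π / (1 / (2 * σ ^ 2)) = (2 * π) * σ ^ 2 := by field_simp
    rw [h1, Real.sqrt_mul (by positivity : (0:ℝ) ≤ 2 * π) (σ ^ 2), Real.sqrt_sq hσ.le, ← hs]
    field_simp
  have hn₁ : C₁ * Real.sqrt (π / (1 / (2 * σ₁ ^ 2))) = 1 := by rw [hC₁]; exact hnorm σ₁ h₁
  have hn₂ : C₂ * Real.sqrt (π / (1 / (2 * σ₂ ^ 2))) = 1 := by rw [hC₂]; exact hnorm σ₂ h₂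
  have hM : Real.sqrt C₁ * Real.sqrt C₂ * Real.sqrt (π / a) = Real.sqrt (2 * σ₁ * σ₂ / S) := by
    rw [← Real.sqrt_mul (by rw [hC₁]; positivity),
      ← Real.sqrt_mul (by rw [hC₁, hC₂]; positivity)]
    congr 1
    rw [hC₁, hC₂, ha, hSdef, hπ]
    field_simp
    ring
  have hprod : (Real.sqrt C₁ * Real.sqrt C₂ * Real.exp (-k)) * Real.sqrt (π / a) =
      Real.sqrt (2 * σ₁ * σ₂ / S) * Real.exp (-(μ₁ - μ₂) ^ 2 / (4 * S)) := by
    rw [show (Real.sqrt C₁ * Real.sqrt C₂ * Real.exp (-k)) * Real.sqrt (π / a) =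
        (Real.sqrt C₁ * Real.sqrt C₂ * Real.sqrt (π / a)) * Real.exp (-k) from by ring,
      hM, hk, neg_div]
  unfold hellingerSqGaussian
  rw [hint]
  linear_combination (1 / 2) * hn₁ + (1 / 2) * hn₂ - hprod

theorem hellinger_gaussian_lower_bounds (μ₁ σ₁ μ₂ σ₂ : ℝ) (h₁ : 0 < σ₁) (h₂ : 0 < σ₂) :
    hellingerSqGaussian μ₁ σ₁ μ₂ σ₂ ≥
        hellingerSqGaussian μ₁ (max σ₁ σ₂) μ₂ (max σ₁ σ₂) ∧
    hellingerSqGaussian μ₁ σ₁ μ₂ σ₂ ≥ hellingerSqGaussian 0 σ₁ 0 σ₂ := by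
  have hm : 0 < max σ₁ σ₂ := lt_max_of_lt_left h₁
  have hS : 0 < σ₁ ^ 2 + σ₂ ^ 2 := by positivity
  rw [hellinger_closed μ₁ σ₁ μ₂ σ₂ h₁ h₂, hellinger_closed μ₁ (max σ₁ σ₂) μ₂ (max σ₁ σ₂) hm hm,
    hellinger_closed 0 σ₁ 0 σ₂ h₁ h₂]
  have hr0 : 0 ≤ 2 * σ₁ * σ₂ / (σ₁ ^ 2 + σ₂ ^ 2) := by positivity
  have hr1 : Real.sqrt (2 * σ₁ * σ₂ / (σ₁ ^ 2 + σ₂ ^ 2)) ≤ 1 := by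
    rw [show (1 : ℝ) = Real.sqrt 1 from (Real.sqrt_one).symm]
    apply Real.sqrt_le_sqrt
    rw [div_le_one hS]
    nlinarith [sq_nonneg (σ₁ - σ₂)]
  constructor
  · have hmm : 2 * max σ₁ σ₂ * max σ₁ σ₂ / (max σ₁ σ₂ ^ 2 + max σ₁ σ₂ ^ 2) = 1 := by
      have : max σ₁ σ₂ ^ 2 + max σ₁ σ₂ ^ 2 = 2 * max σ₁ σ₂ * max σ₁ σ₂ := by ring
      rw [this, div_self (by positivity)]
    rw [hmm, Real.sqrt_one, one_mul]
    have hexp : Real.exp (-(μ₁ - μ₂) ^ 2 / (4 * (σ₁ ^ 2 + σ₂ ^ 2))) ≤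
        Real.exp (-(μ₁ - μ₂) ^ 2 / (4 * (max σ₁ σ₂ ^ 2 + max σ₁ σ₂ ^ 2))) := by
      apply Real.exp_le_exp.mpr
      have hSm : σ₁ ^ 2 + σ₂ ^ 2 ≤ max σ₁ σ₂ ^ 2 + max σ₁ σ₂ ^ 2 := by
        have := le_max_left σ₁ σ₂
        have := le_max_right σ₁ σ₂
        nlinarith
      rw [div_le_div_iff₀ (by positivity) (by positivity)]
      nlinarith [sq_nonneg (μ₁ - μ₂)]
    have h1 : Real.sqrt (2 * σ₁ * σ₂ / (σ₁ ^ 2 + σ₂ ^ 2)) *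
        Real.exp (-(μ₁ - μ₂) ^ 2 / (4 * (σ₁ ^ 2 + σ₂ ^ 2))) ≤
        Real.exp (-(μ₁ - μ₂) ^ 2 / (4 * (max σ₁ σ₂ ^ 2 + max σ₁ σ₂ ^ 2))) := by
      calc _ ≤ 1 * Real.exp (-(μ₁ - μ₂) ^ 2 / (4 * (σ₁ ^ 2 + σ₂ ^ 2))) :=
              mul_le_mul_of_nonneg_right hr1 (Real.exp_nonneg _)
        _ = Real.exp (-(μ₁ - μ₂) ^ 2 / (4 * (σ₁ ^ 2 + σ₂ ^ 2))) := one_mul _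
        _ ≤ _ := hexp
    linarith
  · have : Real.sqrt (2 * σ₁ * σ₂ / (σ₁ ^ 2 + σ₂ ^ 2)) *
        Real.exp (-(μ₁ - μ₂) ^ 2 / (4 * (σ₁ ^ 2 + σ₂ ^ 2))) ≤
        Real.sqrt (2 * σ₁ * σ₂ / (σ₁ ^ 2 + σ₂ ^ 2)) *
          Real.exp (-(0 - 0) ^ 2 / (4 * (σ₁ ^ 2 + σ₂ ^ 2))) := by
      apply mul_le_mul_of_nonneg_left _ (Real.sqrt_nonneg _)
      apply Real.exp_le_exp.mpr
      rw [div_le_div_iff₀ (by positivity) (by positivity)]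
      nlinarith [sq_nonneg (μ₁ - μ₂)]
    linarith
end

section
/- Let G1 = N(μ1,σ1²), G2 = N(μ2,σ2²) be univariate Gaussians with σmax = max{σ1,σ2}, σmin = min{σ1,σ2}. If the total variation distance satisfies dTV(G1,G2) ≤ α for some 0 ≤ α < 1, then (μ2-μ1)²/σmax² ≤ 8α/(1-α) and σmax/σmin ≤ 2/(1-α)². -/
open Real MeasureTheory ProbabilityTheory

/-- Total variation distance between two measures. -/
noncomputable def tvDist {α : Type*} [MeasurableSpace α] (P Q : Measure α) : ℝ :=
  ⨆ s : {s : Set α // MeasurableSet s}, |(P s.1).toReal - (Q s.1).toReal|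

lemma sqrt_exp' (x : ℝ) : Real.sqrt (Real.exp x) = Real.exp (x / 2) := by
  rw [show Real.exp x = Real.exp (x/2) * Real.exp (x/2) by rw [← Real.exp_add]; ring_nf,
    Real.sqrt_mul_self (Real.exp_nonneg _)]

lemma hellinger_affinity (μ₁ σ₁ μ₂ σ₂ : ℝ) (h₁ : 0 < σ₁) (h₂ : 0 < σ₂) :
    ∫ x, Real.sqrt (gaussianPDFReal μ₁ (σ₁ ^ 2).toNNReal x *
        gaussianPDFReal μ₂ (σ₂ ^ 2).toNNReal x)
      = Real.sqrt (2 * σ₁ * σ₂ / (σ₁ ^ 2 + σ₂ ^ 2)) *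
        Real.exp (-((μ₂ - μ₁) ^ 2 / (4 * (σ₁ ^ 2 + σ₂ ^ 2)))) := by
  have hc1 : ((σ₁ ^ 2).toNNReal : ℝ) = σ₁ ^ 2 := Real.coe_toNNReal _ (sq_nonneg _)
  have hc2 : ((σ₂ ^ 2).toNNReal : ℝ) = σ₂ ^ 2 := Real.coe_toNNReal _ (sq_nonneg _)
  have hSS : (0:ℝ) < σ₁ ^ 2 + σ₂ ^ 2 := by positivity
  set SS : ℝ := σ₁ ^ 2 + σ₂ ^ 2 with hSSdef
  set B : ℝ := (μ₁ * σ₂ ^ 2 + μ₂ * σ₁ ^ 2) / SS with hB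
  set A : ℝ := SS / (4 * σ₁ ^ 2 * σ₂ ^ 2) with hA
  have hApos : 0 < A := by positivity
  have key : ∀ x : ℝ, Real.sqrt (gaussianPDFReal μ₁ (σ₁ ^ 2).toNNReal x *
      gaussianPDFReal μ₂ (σ₂ ^ 2).toNNReal x)
      = ((Real.sqrt (2 * π * σ₁ * σ₂))⁻¹ * Real.exp (-((μ₂ - μ₁) ^ 2 / (4 * SS)))) *
        Real.exp (-A * (x - B) ^ 2) := by
    intro x
    rw [gaussianPDFReal, gaussianPDFReal, hc1, hc2]
    have hs1 : Real.sqrt (2 * π * σ₁ ^ 2) = Real.sqrt (2 * π) * σ₁ := by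
      rw [Real.sqrt_mul (by positivity), Real.sqrt_sq h₁.le]
    have hs2 : Real.sqrt (2 * π * σ₂ ^ 2) = Real.sqrt (2 * π) * σ₂ := by
      rw [Real.sqrt_mul (by positivity), Real.sqrt_sq h₂.le]
    have hmul : (Real.sqrt (2 * π * σ₁ ^ 2))⁻¹ * Real.exp (-(x - μ₁) ^ 2 / (2 * σ₁ ^ 2)) *
        ((Real.sqrt (2 * π * σ₂ ^ 2))⁻¹ * Real.exp (-(x - μ₂) ^ 2 / (2 * σ₂ ^ 2)))
        = (2 * π * σ₁ * σ₂)⁻¹ *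
          Real.exp (-(x - μ₁) ^ 2 / (2 * σ₁ ^ 2) + -(x - μ₂) ^ 2 / (2 * σ₂ ^ 2)) := by
      have h2π : Real.sqrt (2 * π) * Real.sqrt (2 * π) = 2 * π :=
        Real.mul_self_sqrt (by positivity)
      rw [hs1, hs2, Real.exp_add,
        show (2 * π * σ₁ * σ₂)⁻¹ = (Real.sqrt (2 * π) * σ₁)⁻¹ * (Real.sqrt (2 * π) * σ₂)⁻¹ by
          rw [← mul_inv]; congr 1; linear_combination σ₁ * σ₂ * h2π.symm]
      ring
    rw [hmul, Real.sqrt_mul (by positivity), sqrt_exp', Real.sqrt_inv]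
    have hsq : Real.sqrt (2 * π * σ₁ * σ₂) * Real.sqrt (2 * π * σ₁ * σ₂)
        = 2 * π * σ₁ * σ₂ := Real.mul_self_sqrt (by positivity)
    have hexp : (-(x - μ₁) ^ 2 / (2 * σ₁ ^ 2) + -(x - μ₂) ^ 2 / (2 * σ₂ ^ 2)) / 2
        = -((μ₂ - μ₁) ^ 2 / (4 * SS)) + -A * (x - B) ^ 2 := by
      rw [hA, hB, hSSdef]
      field_simp
      ring
    rw [hexp, Real.exp_add]
    ring
  rw [MeasureTheory.integral_congr_ae (ae_of_all _ key), MeasureTheory.integral_const_mul]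
  have hint : ∫ x : ℝ, Real.exp (-A * (x - B) ^ 2) = Real.sqrt (π / A) := by
    rw [show (fun x : ℝ => Real.exp (-A * (x - B) ^ 2))
        = (fun y : ℝ => Real.exp (-A * y ^ 2)) ∘ (fun x => x - B) from rfl]
    rw [show ∫ x : ℝ, ((fun y : ℝ => Real.exp (-A * y ^ 2)) ∘ (fun x => x - B)) x
        = ∫ y : ℝ, Real.exp (-A * y ^ 2) from
        integral_sub_right_eq_self (fun y : ℝ => Real.exp (-A * y ^ 2)) B]
    exact integral_gaussian A
  rw [hint]
  have : (Real.sqrt (2 * π * σ₁ * σ₂))⁻¹ * Real.sqrt (π / A) = Real.sqrt (2 * σ₁ * σ₂ / SS) := by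
    rw [← Real.sqrt_inv, ← Real.sqrt_mul (by positivity)]
    congr 1
    rw [hA]
    have hπ := Real.pi_pos
    field_simp
    ring
  calc (Real.sqrt (2 * π * σ₁ * σ₂))⁻¹ * Real.exp (-((μ₂ - μ₁) ^ 2 / (4 * SS)))
        * Real.sqrt (π / A)
      = ((Real.sqrt (2 * π * σ₁ * σ₂))⁻¹ * Real.sqrt (π / A))
        * Real.exp (-((μ₂ - μ₁) ^ 2 / (4 * SS))) := by ring
    _ = _ := by rw [this]


theorem gaussian_tv_parameter_bounds (μ₁ σ₁ μ₂ σ₂ α : ℝ) (h₁ : 0 < σ₁) (h₂ : 0 < σ₂)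
    (hα0 : 0 ≤ α) (hα1 : α < 1)
    (htv : tvDist (gaussianReal μ₁ (σ₁ ^ 2).toNNReal) (gaussianReal μ₂ (σ₂ ^ 2).toNNReal) ≤ α) :
    (μ₂ - μ₁) ^ 2 / (max σ₁ σ₂) ^ 2 ≤ 8 * α / (1 - α) ∧
    max σ₁ σ₂ / min σ₁ σ₂ ≤ 2 / (1 - α) ^ 2 := by
  have hv₁ : (σ₁ ^ 2).toNNReal ≠ 0 := by
    simp only [ne_eq, Real.toNNReal_eq_zero, not_le]; positivity
  have hv₂ : (σ₂ ^ 2).toNNReal ≠ 0 := by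
    simp only [ne_eq, Real.toNNReal_eq_zero, not_le]; positivity
  set p : ℝ → ℝ := gaussianPDFReal μ₁ (σ₁ ^ 2).toNNReal with hp_def
  set q : ℝ → ℝ := gaussianPDFReal μ₂ (σ₂ ^ 2).toNNReal with hq_def
  set P := gaussianReal μ₁ (σ₁ ^ 2).toNNReal
  set Q := gaussianReal μ₂ (σ₂ ^ 2).toNNReal
  have hp : Integrable p := integrable_gaussianPDFReal _ _
  have hq : Integrable q := integrable_gaussianPDFReal _ _
  have hpnn : ∀ x, 0 ≤ p x := gaussianPDFReal_nonneg _ _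
  have hqnn : ∀ x, 0 ≤ q x := gaussianPDFReal_nonneg _ _
  have hpm : Measurable p := measurable_gaussianPDFReal _ _
  have hqm : Measurable q := measurable_gaussianPDFReal _ _
  set s : Set ℝ := {x | q x ≤ p x} with hs_def
  have hs : MeasurableSet s := measurableSet_le hqm hpm
  have hmin : Integrable (fun x => min (p x) (q x)) := hp.inf hq
  have hsqm : Measurable (fun x => Real.sqrt (p x * q x)) := (hpm.mul hqm).sqrt
  have hsqrt : Integrable (fun x => Real.sqrt (p x * q x)) := by
    refine (hp.add hq).mono' hsqm.aestronglyMeasurable (ae_of_all _ fun x => ?_)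
    rw [Real.norm_eq_abs, abs_of_nonneg (Real.sqrt_nonneg _)]
    have h1 : p x * q x ≤ (p x + q x) ^ 2 := by nlinarith [hpnn x, hqnn x]
    calc Real.sqrt (p x * q x) ≤ Real.sqrt ((p x + q x) ^ 2) := Real.sqrt_le_sqrt h1
      _ = p x + q x := Real.sqrt_sq (by nlinarith [hpnn x, hqnn x])
  -- measure values
  have hPs : (P s).toReal = ∫ x in s, p x := by
    rw [gaussianReal_apply_eq_integral _ hv₁ s,
      ENNReal.toReal_ofReal (integral_nonneg fun x => hpnn x)]
  have hQs : (Q s).toReal = ∫ x in s, q x := by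
    rw [gaussianReal_apply_eq_integral _ hv₂ s,
      ENNReal.toReal_ofReal (integral_nonneg fun x => hqnn x)]
  -- key: 1 - ∫ sqrt(pq) ≤ P s - Q s
  have hkey : 1 - ∫ x, Real.sqrt (p x * q x) ≤ (P s).toReal - (Q s).toReal := by
    rw [hPs, hQs, ← integral_sub hp.restrict hq.restrict]
    have hpq : Integrable (fun x => p x - min (p x) (q x)) := hp.sub hmin
    have hmineq : ∫ x, (p x - min (p x) (q x)) = ∫ x in s, (p x - q x) := by
      rw [← integral_add_compl hs hpq]
      have e1 : ∫ x in s, (p x - min (p x) (q x)) = ∫ x in s, (p x - q x) :=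
        setIntegral_congr_fun hs fun x hx => by
          have hx' : q x ≤ p x := hx
          simp only [min_eq_right hx']
      have e2 : ∫ x in sᶜ, (p x - min (p x) (q x)) = 0 := by
        rw [setIntegral_congr_fun hs.compl (g := fun _ => (0:ℝ)) fun x hx => by
          have hx' : ¬ q x ≤ p x := hx
          have hlt : p x < q x := not_le.mp hx'
          simp [min_eq_left hlt.le]]
        simp
      rw [e1, e2, add_zero]
    have hmin_le : ∫ x, min (p x) (q x) ≤ ∫ x, Real.sqrt (p x * q x) := by
      refine integral_mono hmin hsqrt fun x => ?_
      rcases le_total (p x) (q x) with h | h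
      · rw [min_eq_left h]
        calc p x = Real.sqrt (p x * p x) := (Real.sqrt_mul_self (hpnn x)).symm
          _ ≤ Real.sqrt (p x * q x) :=
            Real.sqrt_le_sqrt (mul_le_mul_of_nonneg_left h (hpnn x))
      · rw [min_eq_right h]
        calc q x = Real.sqrt (q x * q x) := (Real.sqrt_mul_self (hqnn x)).symm
          _ ≤ Real.sqrt (p x * q x) :=
            Real.sqrt_le_sqrt (mul_le_mul_of_nonneg_right h (hqnn x))
    have hint_p : ∫ x, p x = 1 := integral_gaussianPDFReal_eq_one _ hv₁
    have h3 : ∫ x, (p x - min (p x) (q x))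
        = (∫ x, p x) - ∫ x, min (p x) (q x) := integral_sub hp hmin
    linarith [hmineq ▸ (hint_p ▸ h3)]
  -- tvDist is an upper bound
  have hle_tv : (P s).toReal - (Q s).toReal ≤ α := by
    have hbdd : BddAbove (Set.range fun t : {t : Set ℝ // MeasurableSet t} =>
        |(P t.1).toReal - (Q t.1).toReal|) := by
      refine ⟨2, ?_⟩
      rintro _ ⟨t, rfl⟩
      have hP1 : (P t.1).toReal ≤ 1 := by
        simpa using ENNReal.toReal_mono ENNReal.one_ne_top (prob_le_one (μ := P) (s := t.1))
      have hQ1 : (Q t.1).toReal ≤ 1 := by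
        simpa using ENNReal.toReal_mono ENNReal.one_ne_top (prob_le_one (μ := Q) (s := t.1))
      have hP0 : 0 ≤ (P t.1).toReal := ENNReal.toReal_nonneg
      have hQ0 : 0 ≤ (Q t.1).toReal := ENNReal.toReal_nonneg
      rw [abs_le]; constructor <;> linarith
    have hstep : |(P s).toReal - (Q s).toReal| ≤ tvDist P Q := le_ciSup hbdd ⟨s, hs⟩
    calc (P s).toReal - (Q s).toReal ≤ |(P s).toReal - (Q s).toReal| := le_abs_self _
      _ ≤ tvDist P Q := hstep
      _ ≤ α := htv
  have hA : 1 - α ≤ ∫ x, Real.sqrt (p x * q x) := by linarith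
  rw [hp_def, hq_def, hellinger_affinity μ₁ σ₁ μ₂ σ₂ h₁ h₂] at hA
  -- algebra
  set M := max σ₁ σ₂ with hM
  set m := min σ₁ σ₂ with hm
  have hMpos : 0 < M := lt_max_of_lt_left h₁
  have hmpos : 0 < m := lt_min h₁ h₂
  have h1α : (0:ℝ) < 1 - α := by linarith
  have hSS : (0:ℝ) < σ₁ ^ 2 + σ₂ ^ 2 := by positivity
  have hS_le_one : Real.sqrt (2 * σ₁ * σ₂ / (σ₁ ^ 2 + σ₂ ^ 2)) ≤ 1 := by
    rw [show (1:ℝ) = Real.sqrt 1 by simp]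
    refine Real.sqrt_le_sqrt ?_
    rw [div_le_one hSS]; nlinarith [sq_nonneg (σ₁ - σ₂)]
  have hE_le_one : Real.exp (-((μ₂ - μ₁) ^ 2 / (4 * (σ₁ ^ 2 + σ₂ ^ 2)))) ≤ 1 := by
    rw [Real.exp_le_one_iff]
    have : (0:ℝ) ≤ (μ₂ - μ₁) ^ 2 / (4 * (σ₁ ^ 2 + σ₂ ^ 2)) := by positivity
    linarith
  have hSnn : 0 ≤ Real.sqrt (2 * σ₁ * σ₂ / (σ₁ ^ 2 + σ₂ ^ 2)) := Real.sqrt_nonneg _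
  have hEnn : 0 < Real.exp (-((μ₂ - μ₁) ^ 2 / (4 * (σ₁ ^ 2 + σ₂ ^ 2)))) := Real.exp_pos _
  constructor
  · -- mean bound
    have hE : 1 - α ≤ Real.exp (-((μ₂ - μ₁) ^ 2 / (4 * (σ₁ ^ 2 + σ₂ ^ 2)))) :=
      le_trans hA (mul_le_of_le_one_left hEnn.le hS_le_one)
    have hlog : Real.log (1 - α) ≤ -((μ₂ - μ₁) ^ 2 / (4 * (σ₁ ^ 2 + σ₂ ^ 2))) :=
      (Real.log_le_iff_le_exp h1α).mpr hE
    have hloginv : Real.log ((1 - α)⁻¹) ≤ (1 - α)⁻¹ - 1 :=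
      Real.log_le_sub_one_of_pos (by positivity)
    rw [Real.log_inv] at hloginv
    have ht : (μ₂ - μ₁) ^ 2 / (4 * (σ₁ ^ 2 + σ₂ ^ 2)) ≤ α / (1 - α) := by
      have : (1 - α)⁻¹ - 1 = α / (1 - α) := by field_simp; ring
      linarith [this ▸ hloginv]
    have hΔ : (μ₂ - μ₁) ^ 2 ≤ 4 * (σ₁ ^ 2 + σ₂ ^ 2) * (α / (1 - α)) :=
      (div_le_iff₀ (by positivity)).mp ht |>.trans_eq (by ring)
    have hM2 : σ₁ ^ 2 + σ₂ ^ 2 ≤ 2 * M ^ 2 := by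
      have e1 : σ₁ ≤ M := le_max_left _ _
      have e2 : σ₂ ≤ M := le_max_right _ _
      nlinarith
    have h4 : (μ₂ - μ₁) ^ 2 * (1 - α) ≤ 4 * (σ₁ ^ 2 + σ₂ ^ 2) * α := by
      have h5 := mul_le_mul_of_nonneg_right hΔ h1α.le
      have h6 : 4 * (σ₁ ^ 2 + σ₂ ^ 2) * (α / (1 - α)) * (1 - α)
          = 4 * (σ₁ ^ 2 + σ₂ ^ 2) * α := by field_simp
      linarith [h6 ▸ h5]
    rw [div_le_div_iff₀ (by positivity) h1α]
    nlinarith [h4, hM2, hα0, sq_nonneg (μ₂ - μ₁)]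
  · -- variance bound
    have hS : 1 - α ≤ Real.sqrt (2 * σ₁ * σ₂ / (σ₁ ^ 2 + σ₂ ^ 2)) :=
      le_trans hA (mul_le_of_le_one_right hSnn hE_le_one)
    have hS2 : (1 - α) ^ 2 ≤ 2 * σ₁ * σ₂ / (σ₁ ^ 2 + σ₂ ^ 2) := by
      have hsq := Real.sq_sqrt (show (0:ℝ) ≤ 2 * σ₁ * σ₂ / (σ₁ ^ 2 + σ₂ ^ 2) by positivity)
      calc (1 - α) ^ 2 ≤ Real.sqrt (2 * σ₁ * σ₂ / (σ₁ ^ 2 + σ₂ ^ 2)) ^ 2 :=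
            pow_le_pow_left₀ h1α.le hS 2
        _ = _ := hsq
    have hσσ : σ₁ * σ₂ = M * m := by
      rcases le_total σ₁ σ₂ with h | h
      · rw [hM, hm, max_eq_right h, min_eq_left h]; ring
      · rw [hM, hm, max_eq_left h, min_eq_right h]
    have hM2' : M ^ 2 ≤ σ₁ ^ 2 + σ₂ ^ 2 := by
      rcases le_total σ₁ σ₂ with h | h
      · rw [hM, max_eq_right h]; exact le_add_of_nonneg_left (by positivity)
      · rw [hM, max_eq_left h]; exact le_add_of_nonneg_right (by positivity)
    have h2 : (1 - α) ^ 2 * (σ₁ ^ 2 + σ₂ ^ 2) ≤ 2 * (M * m) :=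
      calc (1 - α) ^ 2 * (σ₁ ^ 2 + σ₂ ^ 2) ≤ 2 * σ₁ * σ₂ := (le_div_iff₀ hSS).mp hS2
        _ = 2 * (M * m) := by rw [mul_assoc, hσσ]
    have h3 : (1 - α) ^ 2 * M ^ 2 ≤ 2 * (M * m) :=
      le_trans (mul_le_mul_of_nonneg_left hM2' (sq_nonneg _)) h2
    rw [div_le_div_iff₀ hmpos (by positivity : (0:ℝ) < (1 - α) ^ 2)]
    have h4 : (M * (1 - α) ^ 2) * M ≤ (2 * m) * M :=
      calc (M * (1 - α) ^ 2) * M = (1 - α) ^ 2 * M ^ 2 := by ring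
        _ ≤ 2 * (M * m) := h3
        _ = (2 * m) * M := by ring
    exact le_of_mul_le_mul_right h4 hMpos
end
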